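/- arXiv:1410.8478 — 3 statements merged into one kernel-verified Lean document; each statement's English description precedes it below -/
import Mathlib

section
/- Let f* : [0, 2π] → ℂ be absolutely continuous and 2π-periodic. Then for every 0 ≤ r < 1 and φ ∈ ℝ, the φ-derivative of the Poisson integral satisfies ∂_φ P[f*](re^{iφ}) = ∫₀^{2π} P(r, x − φ) ∂_x f*(e^{ix}) dx, where P(r, t) = (1−r²)/(2π(1 − 2r cos t + r²)). -/
open MeasureTheory Real Complex intervalIntegral

/-- The Poisson kernel of the unit disk. -/
noncomputable def stmt6PoissonKernel (r t : ℝ) : ℝ :=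
  (1 - r ^ 2) / (2 * π * (1 - 2 * r * Real.cos t + r ^ 2))

namespace StmtSix

lemma den_pos {r : ℝ} (hr0 : 0 ≤ r) (hr1 : r < 1) (t : ℝ) :
    0 < 1 - 2 * r * Real.cos t + r ^ 2 := by
  nlinarith [Real.cos_le_one t, sq_nonneg (1 - r)]

lemma pk_continuous {r : ℝ} (hr0 : 0 ≤ r) (hr1 : r < 1) : Continuous (stmt6PoissonKernel r) := by
  apply Continuous.div continuous_const (by fun_prop)
  intro t
  exact ne_of_gt (mul_pos (by positivity) (den_pos hr0 hr1 t))

lemma pk_periodic (r : ℝ) : Function.Periodic (stmt6PoissonKernel r) (2 * π) := by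
  intro t; simp [stmt6PoissonKernel, Real.cos_add_two_pi]

lemma pk_nonneg {r : ℝ} (hr0 : 0 ≤ r) (hr1 : r < 1) (t : ℝ) : 0 ≤ stmt6PoissonKernel r t := by
  have h0 := den_pos hr0 hr1 t
  have h1 : (0:ℝ) ≤ 1 - r ^ 2 := by nlinarith
  have h2 := Real.pi_pos
  unfold stmt6PoissonKernel
  positivity

lemma pk_abs_le {r : ℝ} (hr0 : 0 ≤ r) (hr1 : r < 1) (t : ℝ) :
    |stmt6PoissonKernel r t| ≤ (1 - r ^ 2) / (2 * π * (1 - r) ^ 2) := by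
  rw [_root_.abs_of_nonneg (pk_nonneg hr0 hr1 t)]
  unfold stmt6PoissonKernel
  have hπ := Real.pi_pos
  have h1 : (1 - r) ^ 2 ≤ 1 - 2 * r * Real.cos t + r ^ 2 := by
    nlinarith [Real.cos_le_one t]
  have h2 : 0 < (1 - r) ^ 2 := pow_pos (by linarith) 2
  apply div_le_div_of_nonneg_left (by nlinarith) (by nlinarith)
  nlinarith

/-- Fubini swap for an interval integral inside a set integral. -/
lemma swap_aux {w : ℝ → ℝ → ℂ} {c d b : ℝ}
    (h : IntegrableOn (fun p : ℝ × ℝ => w p.1 p.2) (Set.uIoc c d ×ˢ Set.Ioc 0 b)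
      (volume.prod volume)) :
    ∫ y in Set.Ioc 0 b, (∫ t in c..d, w t y) = ∫ t in c..d, ∫ y in Set.Ioc 0 b, w t y := by
  rcases le_total c d with hcd | hcd
  · rw [Set.uIoc_of_le hcd] at h
    have h' : Integrable (Function.uncurry w)
        ((volume.restrict (Set.Ioc c d)).prod (volume.restrict (Set.Ioc 0 b))) := by
      rwa [Measure.prod_restrict]
    simp_rw [intervalIntegral.integral_of_le hcd]
    exact (MeasureTheory.integral_integral_swap h').symm
  · rw [Set.uIoc_of_ge hcd] at h
    have h' : Integrable (Function.uncurry w)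
        ((volume.restrict (Set.Ioc d c)).prod (volume.restrict (Set.Ioc 0 b))) := by
      rwa [Measure.prod_restrict]
    have hs := (MeasureTheory.integral_integral_swap h').symm
    calc ∫ y in Set.Ioc 0 b, ∫ t in c..d, w t y
        = ∫ y in Set.Ioc 0 b, -∫ t in d..c, w t y := by
          simp_rw [intervalIntegral.integral_symm d c]
      _ = -∫ y in Set.Ioc 0 b, ∫ t in d..c, w t y := by rw [MeasureTheory.integral_neg]
      _ = -∫ y in Set.Ioc 0 b, ∫ t in Set.Ioc d c, w t y := by
          simp_rw [intervalIntegral.integral_of_le hcd]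
      _ = -∫ t in Set.Ioc d c, ∫ y in Set.Ioc 0 b, w t y := by rw [hs]
      _ = -∫ t in d..c, ∫ y in Set.Ioc 0 b, w t y := by
          rw [intervalIntegral.integral_of_le hcd]
      _ = ∫ t in c..d, ∫ y in Set.Ioc 0 b, w t y := by
          rw [intervalIntegral.integral_symm d c]

lemma shear_emb : MeasurableEmbedding (fun z : ℝ × ℝ => (z.1, z.1 + z.2)) := by
  let e : ℝ × ℝ ≃ₜ ℝ × ℝ :=
    { toFun := fun z => (z.1, z.1 + z.2)
      invFun := fun z => (z.1, z.2 - z.1)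
      left_inv := fun z => by simp
      right_inv := fun z => by simp
      continuous_toFun := by fun_prop
      continuous_invFun := by fun_prop }
  exact e.measurableEmbedding

end StmtSix

open StmtSix in
/-- Differentiation of the Poisson integral in the angular variable: if the
boundary function `f*` is absolutely continuous (expressed via the
fundamental theorem of calculus with integrable derivative `g`) and
`2π`-periodic, then `∂_φ P[f*](re^{iφ}) = ∫ P(r, x-φ) g(x) dx`. -/
theorem stmt_6 (f g : ℝ → ℂ)
    (hper : ∀ x, f (x + 2 * π) = f x)
    (hgper : ∀ x, g (x + 2 * π) = g x)
    (hgint : ∀ a b : ℝ, IntervalIntegrable g volume a b)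
    (hac : ∀ a b : ℝ, f b - f a = ∫ x in a..b, g x)
    (r : ℝ) (hr0 : 0 ≤ r) (hr1 : r < 1) (φ : ℝ) :
    HasDerivAt (fun ψ => ∫ x in (0:ℝ)..(2 * π), (stmt6PoissonKernel r (x - ψ) : ℂ) * f x)
      (∫ x in (0:ℝ)..(2 * π), (stmt6PoissonKernel r (x - φ) : ℂ) * g x) φ := by
  have hπ : (0:ℝ) < 2 * π := by positivity
  set P : ℝ → ℝ := stmt6PoissonKernel r with hP
  set C : ℝ := (1 - r ^ 2) / (2 * π * (1 - r) ^ 2) with hC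
  have hPc : Continuous P := pk_continuous hr0 hr1
  have hPb : ∀ t, |P t| ≤ C := pk_abs_le hr0 hr1
  have hPper : Function.Periodic P (2 * π) := pk_periodic r
  -- continuity of f
  have hfc : Continuous f := by
    have hfx : ∀ x, f x = f 0 + ∫ t in (0:ℝ)..x, g t := by
      intro x; rw [← hac 0 x]; ring
    rw [funext hfx]
    exact continuous_const.add (intervalIntegral.continuous_primitive hgint 0)
  -- measurability / local integrability of g
  have hgloc : MeasureTheory.LocallyIntegrable g volume := by
    refine MeasureTheory.locallyIntegrable_iff.mpr fun k hk => ?_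
    obtain ⟨R, hR⟩ := hk.isBounded.subset_closedBall 0
    refine ((intervalIntegrable_iff_integrableOn_Icc_of_le
      ((neg_abs_le R).trans (le_abs_self R))).mp (hgint (-|R|) |R|)).mono_set ?_
    refine hR.trans fun x hx => ?_
    rw [Metric.mem_closedBall, Real.dist_eq, sub_zero] at hx
    exact abs_le.mp (hx.trans (le_abs_self R))
  have hgm : AEStronglyMeasurable g volume := hgloc.aestronglyMeasurable
  have hPC : Continuous fun t : ℝ => (P t : ℂ) := Complex.continuous_ofReal.comp hPc
  -- the candidate derivative function
  set K : ℝ → ℂ := fun t => ∫ x in (0:ℝ)..(2 * π), (P (x - t) : ℂ) * g x with hK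
  -- continuity of K
  have hKc : Continuous K := by
    refine intervalIntegral.continuous_of_dominated_interval
      (F := fun t x => (P (x - t) : ℂ) * g x) (bound := fun x => C * ‖g x‖)
      (fun t => ?_) (fun t => ?_) (((hgint 0 (2 * π)).norm).const_mul C) ?_
    · exact ((hPC.comp (continuous_id.sub continuous_const)).aestronglyMeasurable).mul
        hgm.restrict
    · refine Filter.Eventually.of_forall fun x _ => ?_
      rw [norm_mul, Complex.norm_real, Real.norm_eq_abs]
      exact mul_le_mul_of_nonneg_right (hPb _) (norm_nonneg _)
    · refine Filter.Eventually.of_forall fun x _ => ?_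
      exact ((hPC.comp (continuous_const.sub continuous_id)).mul continuous_const)
  -- integrability on rectangles for Fubini
  have hrect : ∀ c d : ℝ, IntegrableOn (fun p : ℝ × ℝ => (P p.2 : ℂ) * g (p.1 + p.2))
      (Set.uIoc c d ×ˢ Set.Ioc 0 (2 * π)) (volume.prod volume) := by
    intro c d
    set I : Set ℝ := Set.Icc (min c d) (max c d + 2 * π) with hI
    have hgI : IntegrableOn g I volume := by
      refine (intervalIntegrable_iff_integrableOn_Icc_of_le ?_).mp
        (hgint (min c d) (max c d + 2 * π))
      have := min_le_max (a := c) (b := d); linarith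
    have hVint : Integrable (fun q : ℝ × ℝ =>
        (Set.uIoc c d).indicator (fun _ => C) q.1 * I.indicator (fun u => ‖g u‖) q.2)
        (volume.prod volume) := by
      refine Integrable.mul_prod ?_ (MeasureTheory.IntegrableOn.integrable_indicator hgI.norm measurableSet_Icc)
      exact (integrableOn_const measure_Ioc_lt_top.ne).integrable_indicator
        measurableSet_uIoc
    have hW : Integrable (fun p : ℝ × ℝ =>
        (Set.uIoc c d).indicator (fun _ => C) p.1 * I.indicator (fun u => ‖g u‖) (p.1 + p.2))
        (volume.prod volume) := by
      have h0 := (measurePreserving_prod_add (volume : Measure ℝ) volume).integrable_comp_emb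
        shear_emb (g := fun q : ℝ × ℝ =>
          (Set.uIoc c d).indicator (fun _ => C) q.1 * I.indicator (fun u => ‖g u‖) q.2)
      exact h0.mpr hVint
    have haesm : AEStronglyMeasurable (fun p : ℝ × ℝ => (P p.2 : ℂ) * g (p.1 + p.2))
        (volume.prod volume) := by
      refine AEStronglyMeasurable.mul ((hPC.comp continuous_snd).aestronglyMeasurable) ?_
      exact (hgm.comp_snd (μ := (volume : Measure ℝ))).comp_measurePreserving
        (measurePreserving_prod_add (volume : Measure ℝ) volume)
    refine Integrable.mono' hW.restrict haesm.restrict ?_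
    filter_upwards [MeasureTheory.ae_restrict_mem
      (measurableSet_uIoc.prod measurableSet_Ioc)] with p hp
    obtain ⟨hp1, hp2⟩ := hp
    have hlo : min c d < p.1 := by
      rcases Set.mem_uIoc.mp hp1 with h | h
      · exact lt_of_le_of_lt (min_le_left c d) h.1
      · exact lt_of_le_of_lt (min_le_right c d) h.1
    have hhi : p.1 ≤ max c d := by
      rcases Set.mem_uIoc.mp hp1 with h | h
      · exact h.2.trans (le_max_right c d)
      · exact h.2.trans (le_max_left c d)
    rw [Set.mem_Ioc] at hp2
    rw [Set.indicator_of_mem hp1, Set.indicator_of_mem]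
    · rw [norm_mul, Complex.norm_real, Real.norm_eq_abs]
      exact mul_le_mul_of_nonneg_right (hPb _) (norm_nonneg _)
    · exact ⟨by linarith, by linarith⟩
  -- the key integral identity
  set F : ℝ → ℂ := fun ψ => ∫ x in (0:ℝ)..(2 * π), (P (x - ψ) : ℂ) * f x with hF
  have hFG : ∀ ψ, F ψ = ∫ y in (0:ℝ)..(2 * π), (P y : ℂ) * f (y + ψ) := by
    intro ψ
    have h1 := intervalIntegral.integral_comp_add_right (a := -ψ) (b := 2 * π - ψ)
      (fun x => (P (x - ψ) : ℂ) * f x) ψ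
    simp only [add_sub_cancel_right, neg_add_cancel, sub_add_cancel] at h1
    have per : Function.Periodic (fun y => (P y : ℂ) * f (y + ψ)) (2 * π) := by
      intro y
      have h2 : y + 2 * π + ψ = y + ψ + 2 * π := by ring
      simp only [h2, hper (y + ψ)]
      rw [hPper y]
    have h3 := per.intervalIntegral_add_eq (-ψ) 0
    rw [show -ψ + 2 * π = 2 * π - ψ by ring, zero_add] at h3
    simp only [hF]
    rw [← h1, h3]
  have hint1 : ∀ ψ, IntervalIntegrable (fun y => (P y : ℂ) * f (y + ψ)) volume 0 (2 * π) :=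
    fun ψ => (hPC.mul (hfc.comp (continuous_id.add continuous_const))).intervalIntegrable 0 (2 * π)
  have key : ∀ ψ, F ψ = F 0 + ∫ t in (0:ℝ)..ψ, K t := by
    intro ψ
    have hsub : F ψ - F 0 = ∫ y in (0:ℝ)..(2 * π), (P y : ℂ) * (f (y + ψ) - f y) := by
      rw [hFG ψ, hFG 0]
      simp only [add_zero]
      rw [← intervalIntegral.integral_sub (g := fun y => (P y : ℂ) * f y) (hint1 ψ)
        ((hPC.mul hfc).intervalIntegrable 0 (2 * π))]
      congr 1; ext y; ring
    have hinner : ∀ y, (P y : ℂ) * (f (y + ψ) - f y)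
        = ∫ t in (0:ℝ)..ψ, (P y : ℂ) * g (t + y) := by
      intro y
      rw [hac y (y + ψ)]
      have h4 := intervalIntegral.integral_comp_add_right (a := (0:ℝ)) (b := ψ) g y
      rw [zero_add, add_comm ψ y] at h4
      rw [← h4, ← intervalIntegral.integral_const_mul]
    have hswap : (∫ y in (0:ℝ)..(2 * π), ∫ t in (0:ℝ)..ψ, (P y : ℂ) * g (t + y))
        = ∫ t in (0:ℝ)..ψ, ∫ y in (0:ℝ)..(2 * π), (P y : ℂ) * g (t + y) := by
      rw [intervalIntegral.integral_of_le hπ.le]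
      rw [swap_aux (w := fun t y => (P y : ℂ) * g (t + y)) (hrect 0 ψ)]
      refine intervalIntegral.integral_congr fun t _ => ?_
      rw [intervalIntegral.integral_of_le hπ.le]
    have hKt : ∀ t, (∫ y in (0:ℝ)..(2 * π), (P y : ℂ) * g (t + y)) = K t := by
      intro t
      have h5 := intervalIntegral.integral_comp_add_right (a := (0:ℝ)) (b := 2 * π)
        (fun x => (P (x - t) : ℂ) * g x) t
      simp only [add_sub_cancel_right, zero_add] at h5
      have per : Function.Periodic (fun x => (P (x - t) : ℂ) * g x) (2 * π) := by
        intro x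
        show (P (x + 2 * π - t) : ℂ) * g (x + 2 * π) = (P (x - t) : ℂ) * g x
        have h6 : x + 2 * π - t = x - t + 2 * π := by ring
        rw [h6, hPper (x - t), hgper x]
      have h7 := per.intervalIntegral_add_eq t 0
      rw [zero_add] at h7
      calc (∫ y in (0:ℝ)..(2 * π), (P y : ℂ) * g (t + y))
          = ∫ y in (0:ℝ)..(2 * π), (P y : ℂ) * g (y + t) :=
            intervalIntegral.integral_congr fun y _ => by rw [add_comm t y]
        _ = ∫ x in t..(2 * π + t), (P (x - t) : ℂ) * g x := h5
        _ = ∫ x in t..(t + 2 * π), (P (x - t) : ℂ) * g x := by rw [add_comm (2 * π) t]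
        _ = ∫ x in (0:ℝ)..(2 * π), (P (x - t) : ℂ) * g x := h7
        _ = K t := rfl
    have hfin : F ψ - F 0 = ∫ t in (0:ℝ)..ψ, K t := by
      rw [hsub]
      simp_rw [hinner]
      rw [hswap]
      exact intervalIntegral.integral_congr fun t _ => hKt t
    exact sub_eq_iff_eq_add'.mp hfin
  have hd : HasDerivAt (fun ψ => F 0 + ∫ t in (0:ℝ)..ψ, K t) (K φ) φ :=
    ((hKc.integral_hasStrictDerivAt 0 φ).hasDerivAt).const_add (F 0)
  have hgoal : HasDerivAt F (K φ) φ :=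
    hd.congr_of_eventuallyEq (Filter.Eventually.of_forall fun ψ => key ψ)
  exact hgoal
end

section
/- Let V : {z : 1/2 ≤ |z| ≤ 1} → ℝ be uniformly continuous and let f be C¹ on circles, with ∂_τ f(re^{iτ}) having argument V(re^{iτ}) and positive modulus. Fix ε ∈ (0, π/2) and δ > 0 such that |V(z) − V(w)| < ε whenever |z − w| < δ and 1/2 ≤ |z|,|w| ≤ 1. Then for s, t with |t − s| < δ and 1/2 ≤ r ≤ 1: |Im( (f(re^{it}) − f(re^{is}))·e^{−iV(re^{is})} )| ≤ (sin ε) ∫_s^t |∂_τ f(re^{iτ})| dτ and Re( (f(re^{it}) − f(re^{is}))·e^{−iV(re^{is})} ) ≥ (cos ε) ∫_s^t |∂_τ f(re^{iτ})| dτ, hence |arg( (f(re^{it}) − f(re^{is}))/(t−s) ) − V(re^{is})| ≤ ε. -/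
open MeasureTheory Real Complex intervalIntegral

lemma aux_abs_exp_I_mul_sub_one (x : ℝ) :
    ‖Complex.exp (Complex.I * x) - 1‖ ≤ |x| := by
  have hre : (Complex.exp (Complex.I * x) - 1).re = Real.cos x - 1 := by
    simp [Complex.exp_re]
  have him : (Complex.exp (Complex.I * x) - 1).im = Real.sin x := by
    simp [Complex.exp_im]
  rw [← pow_le_pow_iff_left₀ (norm_nonneg _) (abs_nonneg x) (two_ne_zero),
    Complex.sq_norm, Complex.normSq_apply, hre, him, _root_.sq_abs]
  have h1 : Real.cos x = 2 * Real.cos (x / 2) ^ 2 - 1 := by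
    rw [← Real.cos_two_mul]; ring_nf
  have h2 := Real.sin_sq_le_sq (x := x / 2)
  have h3 := Real.sin_sq_add_cos_sq (x / 2)
  have h4 := Real.sin_sq_add_cos_sq x
  nlinarith [sq_nonneg (x / 2)]

/-- Key computation in part (b) of the Lindelöf theorem for harmonic q.c.
maps: if the tangent direction `V` oscillates by less than `ε` at scale `δ`,
then the chord `f(re^{it}) - f(re^{is})` makes an angle at most `ε` with
`e^{iV(re^{is})}`. -/
theorem stmt_12 (f : ℂ → ℂ) (V : ℂ → ℝ) (ρ : ℝ → ℝ → ℝ)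
    (ε δ : ℝ) (hε0 : 0 < ε) (hεπ : ε < π / 2) (hδ : 0 < δ)
    (hV : ∀ z w : ℂ, 1 / 2 ≤ ‖z‖ → ‖z‖ ≤ 1 →
      1 / 2 ≤ ‖w‖ → ‖w‖ ≤ 1 →
      ‖z - w‖ < δ → |V z - V w| < ε)
    (r s t : ℝ) (hr : 1 / 2 ≤ r) (hr1 : r ≤ 1) (hst : s < t) (hts : t - s < δ)
    (hρpos : ∀ τ, 0 < ρ r τ)
    (hρint : IntervalIntegrable (fun τ => ρ r τ) volume s t)
    (hρeint : IntervalIntegrable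
      (fun τ => (ρ r τ : ℂ) * Complex.exp (Complex.I * V (r * Complex.exp (Complex.I * τ)))) volume s t)
    (hchord : f (r * Complex.exp (Complex.I * t)) - f (r * Complex.exp (Complex.I * s))
      = ∫ τ in s..t, (ρ r τ : ℂ) * Complex.exp (Complex.I * V (r * Complex.exp (Complex.I * τ)))) :
    |((f (r * Complex.exp (Complex.I * t)) - f (r * Complex.exp (Complex.I * s))) *
        Complex.exp (-Complex.I * V (r * Complex.exp (Complex.I * s)))).im|
        ≤ Real.sin ε * ∫ τ in s..t, ρ r τ
    ∧ Real.cos ε * ∫ τ in s..t, ρ r τ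
        ≤ ((f (r * Complex.exp (Complex.I * t)) - f (r * Complex.exp (Complex.I * s))) *
            Complex.exp (-Complex.I * V (r * Complex.exp (Complex.I * s)))).re
    ∧ |Complex.arg ((f (r * Complex.exp (Complex.I * t)) - f (r * Complex.exp (Complex.I * s))) *
          Complex.exp (-Complex.I * V (r * Complex.exp (Complex.I * s))))| ≤ ε := by
  have hr0 : (0:ℝ) < r := lt_of_lt_of_le (by norm_num) hr
  set W : ℝ → ℝ := fun τ => V (r * Complex.exp (Complex.I * τ)) with hWdef
  set Δ : ℝ → ℝ := fun τ => W τ - W s with hΔdef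
  set c : ℂ := Complex.exp (-Complex.I * W s) with hcdef
  clear_value c
  -- pointwise angle bound
  have habs : ∀ τ : ℝ, ‖(r : ℂ) * Complex.exp (Complex.I * τ)‖ = r := by
    intro τ
    rw [norm_mul, Complex.norm_exp]
    simp [abs_of_pos hr0]
  have hΔbound : ∀ τ ∈ Set.Icc s t, |Δ τ| < ε := by
    intro τ hτ
    apply hV _ _ (by rw [habs]; exact hr) (by rw [habs]; exact hr1)
      (by rw [habs]; exact hr) (by rw [habs]; exact hr1)
    have hfac : (r : ℂ) * Complex.exp (Complex.I * τ) - (r : ℂ) * Complex.exp (Complex.I * s)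
        = (r : ℂ) * Complex.exp (Complex.I * s) *
          (Complex.exp (Complex.I * ((τ - s : ℝ) : ℂ)) - 1) := by
      have he : Complex.exp (Complex.I * s) * Complex.exp (Complex.I * ((τ - s : ℝ) : ℂ))
          = Complex.exp (Complex.I * τ) := by
        rw [← Complex.exp_add]; congr 1; push_cast; ring
      rw [mul_sub, mul_one, mul_assoc, he]
    rw [hfac]
    have h1 : ‖(r : ℂ) * Complex.exp (Complex.I * s)‖ = r := habs s
    rw [norm_mul, h1]
    calc r * ‖Complex.exp (Complex.I * (τ - s : ℝ)) - 1‖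
        ≤ 1 * |τ - s| := by
          apply mul_le_mul hr1 ?_ (norm_nonneg _) zero_le_one
          simpa using aux_abs_exp_I_mul_sub_one (τ - s)
      _ < δ := by
          rw [one_mul, _root_.abs_of_nonneg (by linarith [hτ.1])]
          linarith [hτ.2]
  -- the rotated chord as an integral
  have hGeq : ∀ τ : ℝ, ((ρ r τ : ℂ) * Complex.exp (Complex.I * W τ)) * c
      = (ρ r τ : ℂ) * Complex.exp (Complex.I * (Δ τ : ℝ)) := by
    intro τ
    rw [hcdef, mul_assoc, ← Complex.exp_add]
    congr 2
    simp only [hΔdef]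
    push_cast
    ring
  have hGint : IntervalIntegrable
      (fun τ => (ρ r τ : ℂ) * Complex.exp (Complex.I * (Δ τ : ℝ))) volume s t := by
    have := hρeint.mul_const c
    convert this using 1; funext τ; exact (hGeq τ).symm
  have hz : (f (r * Complex.exp (Complex.I * t)) - f (r * Complex.exp (Complex.I * s))) * c
      = ∫ τ in s..t, (ρ r τ : ℂ) * Complex.exp (Complex.I * (Δ τ : ℝ)) := by
    rw [hchord, ← intervalIntegral.integral_mul_const]
    congr 1
    ext τ
    exact hGeq τ
  -- real and imaginary parts
  have hGre : ∀ τ : ℝ, ((ρ r τ : ℂ) * Complex.exp (Complex.I * (Δ τ : ℝ))).re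
      = ρ r τ * Real.cos (Δ τ) := by
    intro τ
    simp [Complex.exp_re, Complex.exp_im, Complex.mul_re]
  have hGim : ∀ τ : ℝ, ((ρ r τ : ℂ) * Complex.exp (Complex.I * (Δ τ : ℝ))).im
      = ρ r τ * Real.sin (Δ τ) := by
    intro τ
    simp [Complex.exp_re, Complex.exp_im, Complex.mul_im]
  have hreint : IntervalIntegrable (fun τ => ρ r τ * Real.cos (Δ τ)) volume s t := by
    refine ⟨?_, ?_⟩
    · simpa only [IntegrableOn, RCLike.re_to_complex, hGre] using hGint.1.re
    · simpa only [IntegrableOn, RCLike.re_to_complex, hGre] using hGint.2.re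
  have himint : IntervalIntegrable (fun τ => ρ r τ * Real.sin (Δ τ)) volume s t := by
    refine ⟨?_, ?_⟩
    · simpa only [IntegrableOn, RCLike.im_to_complex, hGim] using hGint.1.im
    · simpa only [IntegrableOn, RCLike.im_to_complex, hGim] using hGint.2.im
  have hre : ((f (r * Complex.exp (Complex.I * t)) - f (r * Complex.exp (Complex.I * s))) * c).re
      = ∫ τ in s..t, ρ r τ * Real.cos (Δ τ) := by
    rw [hz, intervalIntegral.integral_of_le hst.le, intervalIntegral.integral_of_le hst.le,
      ← RCLike.re_to_complex, ← integral_re hGint.1]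
    simp only [RCLike.re_to_complex, hGre]
  have him : ((f (r * Complex.exp (Complex.I * t)) - f (r * Complex.exp (Complex.I * s))) * c).im
      = ∫ τ in s..t, ρ r τ * Real.sin (Δ τ) := by
    rw [hz, intervalIntegral.integral_of_le hst.le, intervalIntegral.integral_of_le hst.le,
      ← RCLike.im_to_complex, ← integral_im hGint.1]
    simp only [RCLike.im_to_complex, hGim]
  have hI0pos : 0 < ∫ τ in s..t, ρ r τ :=
    intervalIntegral_pos_of_pos hρint hρpos hst
  have hcosε : 0 < Real.cos ε := Real.cos_pos_of_mem_Ioo ⟨by linarith, hεπ⟩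
  have hsinε : 0 < Real.sin ε := Real.sin_pos_of_pos_of_lt_pi hε0 (by linarith [Real.pi_pos])
  -- imaginary bound
  have hImBound : |((f (r * Complex.exp (Complex.I * t)) - f (r * Complex.exp (Complex.I * s)))
      * c).im| ≤ Real.sin ε * ∫ τ in s..t, ρ r τ := by
    rw [him]
    calc |∫ τ in s..t, ρ r τ * Real.sin (Δ τ)|
        ≤ ∫ τ in s..t, |ρ r τ * Real.sin (Δ τ)| :=
          intervalIntegral.abs_integral_le_integral_abs hst.le
      _ ≤ ∫ τ in s..t, Real.sin ε * ρ r τ := by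
          apply intervalIntegral.integral_mono_on hst.le himint.abs (hρint.const_mul _)
          intro τ hτ
          have h1 := hΔbound τ hτ
          have ha := abs_lt.1 h1
          have h2 : |Real.sin (Δ τ)| ≤ Real.sin ε := by
            rw [abs_le]
            constructor
            · have hx1 : -(π / 2) ≤ -ε := neg_le_neg hεπ.le
              have hy2 : Δ τ ≤ π / 2 := (lt_trans ha.2 hεπ).le
              have hmono := Real.sin_le_sin_of_le_of_le_pi_div_two hx1 hy2 ha.1.le
              rwa [Real.sin_neg] at hmono
            · have hx1 : -(π / 2) ≤ Δ τ := (lt_trans (neg_lt_neg hεπ) ha.1).le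
              exact Real.sin_le_sin_of_le_of_le_pi_div_two hx1 hεπ.le ha.2.le
          rw [_root_.abs_mul, _root_.abs_of_pos (hρpos τ)]
          calc ρ r τ * |Real.sin (Δ τ)| ≤ ρ r τ * Real.sin ε :=
                mul_le_mul_of_nonneg_left h2 (hρpos τ).le
            _ = Real.sin ε * ρ r τ := mul_comm _ _
      _ = Real.sin ε * ∫ τ in s..t, ρ r τ := by
          rw [← intervalIntegral.integral_const_mul]
  -- real bound
  have hReBound : Real.cos ε * ∫ τ in s..t, ρ r τ
      ≤ ((f (r * Complex.exp (Complex.I * t)) - f (r * Complex.exp (Complex.I * s))) * c).re := by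
    rw [hre, ← intervalIntegral.integral_const_mul]
    apply intervalIntegral.integral_mono_on hst.le (hρint.const_mul _) hreint
    intro τ hτ
    have h1 := hΔbound τ hτ
    have h2 : Real.cos ε ≤ Real.cos (Δ τ) := by
      rw [← Real.cos_abs (Δ τ)]
      apply Real.cos_le_cos_of_nonneg_of_le_pi (abs_nonneg _)
        (hεπ.le.trans (half_le_self Real.pi_pos.le)) h1.le
    calc Real.cos ε * ρ r τ = ρ r τ * Real.cos ε := mul_comm _ _
      _ ≤ ρ r τ * Real.cos (Δ τ) := mul_le_mul_of_nonneg_left h2 (hρpos τ).le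
  refine ⟨hImBound, hReBound, ?_⟩
  -- argument bound
  set z := (f (r * Complex.exp (Complex.I * t)) - f (r * Complex.exp (Complex.I * s))) * c with hzdef
  have hzre : 0 < z.re := lt_of_lt_of_le (mul_pos hcosε hI0pos) hReBound
  have hargz : |Complex.arg z| < π / 2 := Complex.abs_arg_lt_pi_div_two_iff.2 (Or.inl hzre)
  by_contra hcon
  push_neg at hcon
  have htanlt : Real.tan ε < Real.tan |Complex.arg z| :=
    Real.tan_lt_tan_of_nonneg_of_lt_pi_div_two hε0.le hargz hcon
  have htanabs : Real.tan |Complex.arg z| ≤ |Real.tan (Complex.arg z)| := by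
    rcases abs_cases (Complex.arg z) with ⟨h, _⟩ | ⟨h, _⟩
    · rw [h]; exact le_abs_self _
    · rw [h, Real.tan_neg]; exact neg_le_abs _
  have htaneq : Real.tan (Complex.arg z) = z.im / z.re := Complex.tan_arg z
  have hbound : |z.im / z.re| ≤ Real.tan ε := by
    rw [_root_.abs_div, _root_.abs_of_pos hzre]
    calc |z.im| / z.re ≤ (Real.sin ε * ∫ τ in s..t, ρ r τ) /
          (Real.cos ε * ∫ τ in s..t, ρ r τ) := by
          exact div_le_div₀ (by positivity) hImBound (mul_pos hcosε hI0pos) hReBound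
      _ = Real.tan ε := by
          rw [mul_div_mul_right _ _ (ne_of_gt hI0pos), Real.tan_eq_sin_div_cos]
  rw [htaneq] at htanabs
  linarith [lt_of_lt_of_le htanlt (le_trans htanabs hbound)]
end

section
/- Let a, b : U → ℂ be holomorphic on the unit disk with |b'(z)| ≤ k|a'(z)| for all z and 0 ≤ k < 1, and suppose a'(0) ≠ 0 with (1−k)|a'(0)| ≥ 1. If t ↦ a(e^{it}) + conj(b(e^{it})) is absolutely continuous with derivative ∂_t f(e^{it}) = i e^{it} a'(e^{it}) + conj(i e^{it} b'(e^{it})) ∈ L¹, then ∫₀^{2π} log|∂_t f(e^{it})| dt/(2π) ≥ log[(1−k)|a'(0)|] ≥ 0. -/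
open Complex Real MeasureTheory Metric
open scoped NNReal ENNReal

lemma exists_primitive {q : ℂ → ℂ} {r s : ℝ} (hs0 : 0 < s) (hsr : s < r)
    (hq : DifferentiableOn ℂ q (ball (0 : ℂ) r)) :
    ∃ G : ℂ → ℂ, ∀ z ∈ ball (0 : ℂ) s, HasDerivAt G (q z) z := by
  have hr0 : 0 < r := hs0.trans hsr
  set s' : ℝ := (s + r) / 2 with hs'
  have hss' : s < s' := by simp [hs']; linarith
  have hs'r : s' < r := by simp [hs']; linarith
  have hs'0 : 0 < s' := hs0.trans hss'
  have hqcb : DifferentiableOn ℂ q (closedBall (0 : ℂ) s'.toNNReal) := by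
    apply hq.mono
    intro z hz
    simp only [mem_closedBall, mem_ball] at hz ⊢
    calc dist z 0 ≤ s'.toNNReal := hz
      _ = s' := by simp [Real.coe_toNNReal _ hs'0.le]
      _ < r := hs'r
  have hps : HasFPowerSeriesOnBall q (cauchyPowerSeries q 0 s'.toNNReal) 0 s'.toNNReal :=
    hqcb.hasFPowerSeriesOnBall (by simp [Real.toNNReal_pos.2 hs'0])
  set p := cauchyPowerSeries q 0 s'.toNNReal with hp
  set c : ℕ → ℂ := fun n => p.coeff n with hc
  have hcoefle : ∀ n, ‖c n‖ ≤ ‖p n‖ := by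
    intro n
    have h1 : (p n fun _ => (1:ℂ)) = c n := by
      rw [p.apply_eq_pow_smul_coeff]; simp [hc]
    calc ‖c n‖ = ‖p n fun _ => (1:ℂ)‖ := by rw [h1]
      _ ≤ ‖p n‖ * ∏ _i : Fin n, ‖(1:ℂ)‖ := (p n).le_opNorm _
      _ = ‖p n‖ := by simp
  have hlt : (s.toNNReal : ℝ≥0∞) < p.radius := by
    calc (s.toNNReal : ℝ≥0∞) < s'.toNNReal := by
          rw [ENNReal.coe_lt_coe]
          exact (Real.toNNReal_lt_toNNReal_iff hs'0).2 hss'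
      _ ≤ p.radius := hps.r_le
  have hsum : Summable fun n => ‖p n‖ * s ^ n := by
    have := p.summable_norm_mul_pow hlt
    simpa [Real.coe_toNNReal _ hs0.le] using this
  -- the primitive
  refine ⟨fun z => ∑' n, c n / (n + 1) * z ^ (n + 1), ?_⟩
  intro z hz
  have key : HasDerivAt (fun w => ∑' n, c n / (n + 1) * w ^ (n + 1))
      (∑' n, c n * z ^ n) z := by
    apply hasDerivAt_tsum_of_isPreconnected hsum isOpen_ball
      (convex_ball (0:ℂ) s).isPreconnected
      (g' := fun n y => c n * y ^ n) (y₀ := 0)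
    · intro n y hy
      have h1 : HasDerivAt (fun w : ℂ => w ^ (n + 1)) ((n + 1 : ℕ) * y ^ n) y := by
        simpa using hasDerivAt_pow (n + 1) y
      have := h1.const_mul (c n / (n + 1))
      refine this.congr_deriv ?_
      have hne : (n : ℂ) + 1 ≠ 0 := Nat.cast_add_one_ne_zero n
      push_cast
      rw [div_mul_eq_mul_div, div_eq_iff hne]
      ring
    · intro n y hy
      simp only [mem_ball, dist_zero_right] at hy
      calc ‖c n * y ^ n‖ = ‖c n‖ * ‖y‖ ^ n := by simp [norm_mul, norm_pow]
        _ ≤ ‖p n‖ * s ^ n := by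
            apply mul_le_mul (hcoefle n) (pow_le_pow_left₀ (norm_nonneg y) hy.le n)
              (by positivity) (norm_nonneg _)
    · exact mem_ball_self hs0
    · apply summable_of_ne_finset_zero (s := ∅)
      intro n _
      simp
    · exact hz
  convert key using 1
  -- q z = ∑' n, c n * z ^ n
  have hzmem : z ∈ EMetric.ball (0:ℂ) s'.toNNReal := by
    simp only [mem_ball, dist_zero_right] at hz
    show edist z 0 < _
    rw [edist_zero_right]
    have h2 : ‖z‖₊ < s'.toNNReal := by
      rw [Real.lt_toNNReal_iff_coe_lt, coe_nnnorm]
      exact hz.trans hss'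
    exact_mod_cast h2
  have := hps.hasSum hzmem
  simp only [zero_add] at this
  have heq : (fun n => p n fun _ => z) = fun n => c n * z ^ n := by
    funext n
    rw [p.apply_eq_pow_smul_coeff, smul_eq_mul, mul_comm]
  rw [heq] at this
  exact this.tsum_eq.symm


lemma exists_hol_log {a : ℂ → ℂ} {R : ℝ} (hR : 1 < R)
    (ha : DifferentiableOn ℂ a (ball (0 : ℂ) R))
    (hane : ∀ z ∈ closedBall (0 : ℂ) 1, deriv a z ≠ 0) :
    ∃ s : ℝ, 1 < s ∧ ∃ g : ℂ → ℂ,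
      (∀ z ∈ ball (0 : ℂ) s, DifferentiableAt ℂ g z) ∧
      (∀ z ∈ ball (0 : ℂ) s, Complex.exp (g z) = deriv a z) := by
  have hda : AnalyticOnNhd ℂ (deriv a) (ball (0:ℂ) R) :=
    (ha.analyticOnNhd isOpen_ball).deriv
  -- open set where deriv a ≠ 0
  set U : Set ℂ := ball (0:ℂ) R ∩ (deriv a) ⁻¹' {(0:ℂ)}ᶜ with hU
  have hUopen : IsOpen U :=
    hda.continuousOn.isOpen_inter_preimage isOpen_ball isOpen_compl_singleton
  have hsubU : closedBall (0:ℂ) 1 ⊆ U := by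
    intro z hz
    refine ⟨?_, hane z hz⟩
    simp only [mem_closedBall, dist_zero_right] at hz
    simp only [mem_ball, dist_zero_right]
    linarith
  obtain ⟨δ, hδ0, hδsub⟩ :=
    (isCompact_closedBall (0:ℂ) 1).exists_thickening_subset_open hUopen hsubU
  rw [thickening_closedBall hδ0 zero_le_one] at hδsub
  -- choose radius r
  set r : ℝ := min (1 + δ) ((1 + R) / 2) with hr
  have hr1 : 1 < r := lt_min (by linarith) (by linarith)
  have hrball : ball (0:ℂ) r ⊆ U := fun z hz => hδsub (by
    simp only [mem_ball, dist_zero_right] at hz ⊢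
    have hle : r ≤ δ + 1 := (min_le_left _ _).trans (by linarith)
    exact hz.trans_le hle)
  have hrR : ball (0:ℂ) r ⊆ ball (0:ℂ) R := fun z hz => (hrball hz).1
  -- q = (deriv a)'/(deriv a)
  set q : ℂ → ℂ := fun z => deriv (deriv a) z / deriv a z with hq
  have hqdiff : DifferentiableOn ℂ q (ball (0:ℂ) r) := by
    apply DifferentiableOn.div
    · exact (hda.deriv.differentiableOn).mono hrR
    · exact (hda.differentiableOn).mono hrR
    · intro z hz; exact (hrball hz).2
  -- primitive G of q
  set s : ℝ := (1 + r) / 2 with hs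
  have hs1 : 1 < s := by simp [hs]; linarith
  have hsr : s < r := by simp [hs]; linarith
  obtain ⟨G, hG⟩ := exists_primitive (by linarith : (0:ℝ) < s) hsr hqdiff
  -- F = deriv a * exp (-G) is constant on ball 0 s
  set F : ℂ → ℂ := fun z => deriv a z * Complex.exp (-G z) with hF
  have hFd : ∀ z ∈ ball (0:ℂ) s, HasDerivAt F 0 z := by
    intro z hz
    have hzr : z ∈ ball (0:ℂ) r := ball_subset_ball hsr.le hz
    have h1 : HasDerivAt (deriv a) (deriv (deriv a) z) z :=
      ((hda z (hrR hzr)).differentiableAt).hasDerivAt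
    have h2 : HasDerivAt (fun w => Complex.exp (-G w))
        (Complex.exp (-G z) * (-(q z))) z := ((hG z hz).neg).cexp
    have := h1.mul h2
    refine this.congr_deriv ?_
    have hne : deriv a z ≠ 0 := (hrball hzr).2
    have hqz : deriv a z * q z = deriv (deriv a) z := by
      simp only [hq]; field_simp
    linear_combination (-cexp (-G z)) * hqz
  have hFconst : ∀ z ∈ ball (0:ℂ) s, F z = F 0 := by
    intro z hz
    have h0 : (0:ℂ) ∈ ball (0:ℂ) s := mem_ball_self (by linarith)
    apply (convex_ball (0:ℂ) s).is_const_of_fderivWithin_eq_zero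
      (fun w hw => (hFd w hw).differentiableAt.differentiableWithinAt) ?_ hz h0
    intro w hw
    rw [fderivWithin_of_isOpen isOpen_ball hw]
    have h2 := (hFd w hw).hasFDerivAt.fderiv
    rw [h2]
    ext x
    simp
  -- build g
  have h0mem : (0:ℂ) ∈ closedBall (0:ℂ) 1 := by simp
  have ha0 : deriv a 0 ≠ 0 := hane 0 h0mem
  refine ⟨s, hs1, fun z => Complex.log (deriv a 0) - G 0 + G z, ?_, ?_⟩
  · intro z hz
    exact (((hG z hz).const_add (Complex.log (deriv a 0) - G 0))).differentiableAt
  · intro z hz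
    have := hFconst z hz
    simp only [hF] at this
    have hexp : Complex.exp (Complex.log (deriv a 0) - G 0 + G z)
        = deriv a 0 * Complex.exp (-G 0) * Complex.exp (G z) := by
      rw [Complex.exp_add, Complex.exp_sub, Complex.exp_log ha0, Complex.exp_neg]
      field_simp
    rw [hexp, ← this]
    rw [mul_assoc, ← Complex.exp_add]
    simp
lemma mean_value_re {g : ℂ → ℂ} {s : ℝ} (hs : 1 < s)
    (hgd : ∀ z ∈ ball (0:ℂ) s, DifferentiableAt ℂ g z) :
    ∫ t in (0:ℝ)..(2*π), (g (Complex.exp (Complex.I * t))).re = 2*π*(g 0).re := by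
  have hmem : ∀ z : ℂ, ‖z‖ ≤ 1 → z ∈ ball (0:ℂ) s := by
    intro z hz
    simp only [mem_ball, dist_zero_right]
    linarith
  have hd : DiffContOnCl ℂ g (ball (0:ℂ) 1) := by
    constructor
    · intro z hz
      simp only [mem_ball, dist_zero_right] at hz
      exact (hgd z (hmem z hz.le)).differentiableWithinAt
    · rw [closure_ball (0:ℂ) one_ne_zero]
      intro z hz
      simp only [mem_closedBall, dist_zero_right] at hz
      exact ((hgd z (hmem z hz)).continuousAt).continuousWithinAt
  have h := hd.circleIntegral_sub_inv_smul (mem_ball_self one_pos)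
  rw [circleIntegral] at h
  have hcont : Continuous fun t : ℝ => g (Complex.exp (Complex.I * t)) := by
    rw [continuous_iff_continuousAt]
    intro t
    have h1 : Continuous fun t : ℝ => Complex.exp (Complex.I * t) :=
      Complex.continuous_exp.comp (continuous_const.mul Complex.continuous_ofReal)
    have h2 : ‖Complex.exp (Complex.I * (t:ℂ))‖ ≤ 1 := by
      rw [Complex.norm_exp]
      simp
    exact ContinuousAt.comp (x := t) ((hgd _ (hmem _ h2)).continuousAt) h1.continuousAt
  have heq : ∀ t : ℝ, deriv (circleMap 0 1) t • ((circleMap 0 1 t - 0)⁻¹ • g (circleMap 0 1 t))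
      = Complex.I * g (Complex.exp (Complex.I * t)) := by
    intro t
    have hne : Complex.exp ((t:ℂ) * Complex.I) ≠ 0 := Complex.exp_ne_zero _
    rw [deriv_circleMap]
    simp only [circleMap_zero, smul_eq_mul, sub_zero, ofReal_one, one_mul]
    rw [mul_comm (t:ℂ) Complex.I] at hne ⊢
    field_simp
  rw [intervalIntegral.integral_congr (fun t _ => heq t)] at h
  rw [intervalIntegral.integral_const_mul] at h
  have h2 : (∫ t in (0:ℝ)..(2*π), g (Complex.exp (Complex.I * t))) = 2*π* g 0 := by
    apply mul_left_cancel₀ Complex.I_ne_zero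
    rw [h, smul_eq_mul]
    push_cast
    ring
  have hInt : IntervalIntegrable (fun t : ℝ => g (Complex.exp (Complex.I * t))) volume 0 (2*π) :=
    hcont.intervalIntegrable 0 (2*π)
  have h3 := Complex.reCLM.intervalIntegral_comp_comm hInt
  simp only [Complex.reCLM_apply] at h3
  rw [h3, h2]
  simp

/-- Sub-mean-value estimate for `log |∂_t f|` with `f = a + conj b` harmonic
and `k`-quasiconformal: the average of `log |∂_t f(e^{it})|` over the circle
is at least `log ((1-k)|a'(0)|) ≥ 0`. -/
theorem stmt_17 (a b : ℂ → ℂ) (R : ℝ) (hR : 1 < R)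
    (ha : DifferentiableOn ℂ a (ball (0 : ℂ) R))
    (hb : DifferentiableOn ℂ b (ball (0 : ℂ) R))
    (k : ℝ) (hk0 : 0 ≤ k) (hk1 : k < 1)
    (hqc : ∀ z ∈ ball (0 : ℂ) R,
      norm (deriv b z) ≤ k * norm (deriv a z))
    (hane : ∀ z ∈ closedBall (0 : ℂ) 1, deriv a z ≠ 0)
    (hnorm : 1 ≤ (1 - k) * norm (deriv a 0)) :
    Real.log ((1 - k) * norm (deriv a 0))
        ≤ (∫ t in (0:ℝ)..(2 * π),
            Real.log (norm
              (Complex.I * Complex.exp (Complex.I * t) * deriv a (Complex.exp (Complex.I * t)) +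
                (starRingEnd ℂ)
                  (Complex.I * Complex.exp (Complex.I * t) * deriv b (Complex.exp (Complex.I * t)))))) / (2 * π)
      ∧ 0 ≤ Real.log ((1 - k) * norm (deriv a 0)) := by
  have hk' : (0:ℝ) < 1 - k := by linarith
  refine ⟨?_, Real.log_nonneg hnorm⟩
  obtain ⟨s, hs1, g, hgd, hgexp⟩ := exists_hol_log hR ha hane
  set z : ℝ → ℂ := fun t => Complex.exp (Complex.I * t) with hz
  have habs1 : ∀ t : ℝ, ‖z t‖ = 1 := by
    intro t; rw [hz]; simp [Complex.norm_exp]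
  have hmemR : ∀ t : ℝ, z t ∈ ball (0:ℂ) R := by
    intro t; simp only [mem_ball, dist_zero_right, habs1 t]; linarith
  have hmems : ∀ t : ℝ, z t ∈ ball (0:ℂ) s := by
    intro t; simp only [mem_ball, dist_zero_right, habs1 t]; linarith
  have hmem1 : ∀ t : ℝ, z t ∈ closedBall (0:ℂ) 1 := by
    intro t; simp only [mem_closedBall, dist_zero_right, habs1 t, le_refl]
  have ha0 : deriv a 0 ≠ 0 := hane 0 (by simp)
  have ha0' : (0:ℝ) < ‖deriv a 0‖ := norm_pos_iff.mpr ha0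
  have hlog : ∀ w ∈ ball (0:ℂ) s, Real.log (‖deriv a w‖) = (g w).re := by
    intro w hw
    rw [← hgexp w hw, Complex.norm_exp, Real.log_exp]
  set D : ℝ → ℂ := fun t =>
    Complex.I * Complex.exp (Complex.I * t) * deriv a (Complex.exp (Complex.I * t)) +
      (starRingEnd ℂ) (Complex.I * Complex.exp (Complex.I * t) * deriv b (Complex.exp (Complex.I * t))) with hD
  have hapos : ∀ t : ℝ, 0 < ‖deriv a (z t)‖ := fun t =>
    norm_pos_iff.mpr (hane (z t) (hmem1 t))
  have hDlow : ∀ t : ℝ, (1 - k) * ‖deriv a (z t)‖ ≤ ‖D t‖ := by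
    intro t
    have h1 : ‖Complex.I * z t * deriv a (z t)‖ = ‖deriv a (z t)‖ := by
      simp [map_mul, habs1 t]
    have h2 : ‖(starRingEnd ℂ) (Complex.I * z t * deriv b (z t))‖
        = ‖deriv b (z t)‖ := by
      rw [Complex.norm_conj]; simp [map_mul, habs1 t]
    have h4 : ‖Complex.I * z t * deriv a (z t)‖
        ≤ ‖D t‖ + ‖(starRingEnd ℂ) (Complex.I * z t * deriv b (z t))‖ := by
      calc ‖Complex.I * z t * deriv a (z t)‖
          = ‖D t - (starRingEnd ℂ) (Complex.I * z t * deriv b (z t))‖ := by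
            simp only [hD, hz]; ring_nf
        _ ≤ _ := norm_sub_le _ _
    rw [h1, h2] at h4
    have h5 : ‖deriv b (z t)‖ ≤ k * ‖deriv a (z t)‖ :=
      hqc (z t) (hmemR t)
    linarith
  have hDpos : ∀ t : ℝ, 0 < ‖D t‖ := fun t =>
    lt_of_lt_of_le (mul_pos hk' (hapos t)) (hDlow t)
  -- continuity
  have hzc : Continuous z :=
    Complex.continuous_exp.comp (continuous_const.mul Complex.continuous_ofReal)
  have hda : AnalyticOnNhd ℂ (deriv a) (ball (0:ℂ) R) := (ha.analyticOnNhd isOpen_ball).deriv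
  have hdb : AnalyticOnNhd ℂ (deriv b) (ball (0:ℂ) R) := (hb.analyticOnNhd isOpen_ball).deriv
  have hDc : Continuous D := by
    have h1 : Continuous fun t => deriv a (z t) :=
      hda.continuousOn.comp_continuous hzc hmemR
    have h2 : Continuous fun t => deriv b (z t) :=
      hdb.continuousOn.comp_continuous hzc hmemR
    exact ((continuous_const.mul hzc).mul h1).add
      (Complex.continuous_conj.comp ((continuous_const.mul hzc).mul h2))
  have hφc : Continuous fun t => Real.log (‖D t‖) :=
    hDc.norm.log fun t => (hDpos t).ne'
  have hgc : Continuous fun t => (g (z t)).re := by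
    apply Complex.continuous_re.comp
    rw [continuous_iff_continuousAt]
    intro t
    exact ContinuousAt.comp (x := t) ((hgd _ (hmems t)).continuousAt) hzc.continuousAt
  have hψc : Continuous fun t => Real.log (1 - k) + (g (z t)).re :=
    continuous_const.add hgc
  -- pointwise inequality
  have hpt : ∀ t ∈ Set.Icc (0:ℝ) (2*π),
      Real.log (1 - k) + (g (z t)).re ≤ Real.log (‖D t‖) := by
    intro t _
    have h1 : Real.log ((1 - k) * ‖deriv a (z t)‖)
        ≤ Real.log (‖D t‖) :=
      Real.log_le_log (mul_pos hk' (hapos t)) (hDlow t)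
    rwa [Real.log_mul hk'.ne' (hapos t).ne', hlog (z t) (hmems t)] at h1
  -- integrate
  have hmono := intervalIntegral.integral_mono_on (μ := volume)
    (Real.two_pi_pos.le) (hψc.intervalIntegrable 0 (2*π))
    (hφc.intervalIntegrable 0 (2*π)) hpt
  have hmv := mean_value_re hs1 hgd
  have hint : (∫ t in (0:ℝ)..(2*π), (Real.log (1 - k) + (g (z t)).re))
      = 2*π*Real.log (1 - k) + 2*π*(g 0).re := by
    rw [intervalIntegral.integral_add (intervalIntegrable_const) (hgc.intervalIntegrable 0 (2*π))]
    rw [intervalIntegral.integral_const, hmv]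
    simp [smul_eq_mul]
  rw [hint] at hmono
  have hg0 : (g 0).re = Real.log (‖deriv a 0‖) :=
    (hlog 0 (mem_ball_self (by linarith))).symm
  rw [hg0] at hmono
  rw [le_div_iff₀ Real.two_pi_pos]
  calc Real.log ((1 - k) * ‖deriv a 0‖) * (2*π)
      = 2*π*Real.log (1 - k) + 2*π*Real.log (‖deriv a 0‖) := by
        rw [Real.log_mul hk'.ne' ha0'.ne']; ring
    _ ≤ _ := hmono
end
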